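/- Fix a natural number i and let f : ℕ → ℤ satisfy: (a) f(S XOR (3·2^(2i+1))) = −f(S) for every S (where XOR is bitwise exclusive or, so XOR with 3·2^(2i+1) flips exactly the binary digits at positions 2i+1 and 2i+2); (b) |f(S)| ≤ 1 for all S; and (c) f(S) = 0 whenever S mod 2^(2i+1) ≠ 2^(2i) (i.e., f is supported on odd multiples of 2^(2i)). Then for every natural number T, |Σ_{S=0}^{T−1} f(S)| ≤ 2. -/

import Mathlib

lemma xor_split (m q a b c : ℕ) (ha : a < 2^m) (hc : c < 2^m) :
    (2^m * q + a) ^^^ (2^m * b + c) = 2^m * (q ^^^ b) + (a ^^^ c) := by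
  have hx : a ^^^ c < 2^m := Nat.xor_lt_two_pow ha hc
  apply Nat.eq_of_testBit_eq
  intro j
  rw [Nat.testBit_xor, Nat.testBit_two_pow_mul_add _ ha, Nat.testBit_two_pow_mul_add _ hc,
    Nat.testBit_two_pow_mul_add _ hx]
  by_cases h : j < m <;> simp [h]

lemma four_xor (q a : ℕ) (ha : a < 4) : (4*q + a) ^^^ 3 = 4*q + (a ^^^ 3) := by
  have := xor_split 2 q a 0 3 (by omega) (by norm_num)
  simpa using this

lemma block_zero (F : ℕ → ℤ) (h1 : ∀ k, F (k ^^^ 3) = -F k) :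
    ∀ q : ℕ, ∑ k ∈ Finset.range (4*q), F k = 0 := by
  intro q
  induction q with
  | zero => simp
  | succ q ih =>
    have e : 4*(q+1) = (4*q) + 1 + 1 + 1 + 1 := by ring
    have x0 : F (4*q + 3) = -F (4*q) := by
      have := four_xor q 0 (by norm_num); simp at this; rw [← this, h1]
    have x1 : F (4*q + 2) = -F (4*q + 1) := by
      have := four_xor q 1 (by norm_num)
      rw [show (1:ℕ) ^^^ 3 = 2 from rfl] at this
      rw [← this, h1]
    rw [e, Finset.sum_range_succ, Finset.sum_range_succ, Finset.sum_range_succ,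
      Finset.sum_range_succ, ih]
    have : 4*q+1+1 = 4*q+2 := by ring
    rw [this]
    have : 4*q+1+1+1 = 4*q+3 := by ring
    rw [this, x0, x1]
    ring

lemma abs_partial (F : ℕ → ℤ) (h1 : ∀ k, F (k ^^^ 3) = -F k) (h2 : ∀ k, |F k| ≤ 1) :
    ∀ K : ℕ, |∑ k ∈ Finset.range K, F k| ≤ 2 := by
  intro K
  obtain ⟨q, r, hr, rfl⟩ : ∃ q r, r < 4 ∧ K = 4*q + r :=
    ⟨K/4, K%4, Nat.mod_lt _ (by norm_num), (Nat.div_add_mod K 4).symm⟩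
  have hb := block_zero F h1 q
  interval_cases r
  · simp [hb]
  · rw [Finset.sum_range_succ, hb, zero_add]
    exact (h2 _).trans (by norm_num)
  · rw [show 4*q+2 = (4*q)+1+1 from by ring, Finset.sum_range_succ, Finset.sum_range_succ, hb,
      zero_add]
    calc |F (4*q) + F (4*q+1)| ≤ |F (4*q)| + |F (4*q+1)| := abs_add_le _ _
      _ ≤ 2 := by have := h2 (4*q); have := h2 (4*q+1); omega
  · rw [show 4*q+3 = (4*q)+1+1+1 from by ring, Finset.sum_range_succ, Finset.sum_range_succ,
      Finset.sum_range_succ, hb, zero_add]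
    have x1 : F (4*q+1+1) = -F (4*q + 1) := by
      have := four_xor q 1 (by norm_num)
      rw [show (1:ℕ) ^^^ 3 = 2 from rfl] at this
      rw [show 4*q+1+1 = 4*q+2 from by ring, ← this, h1]
    rw [x1]
    have := h2 (4*q)
    calc |F (4*q) + F (4*q+1) + -F (4*q+1)| = |F (4*q)| := by ring_nf
      _ ≤ 2 := by omega

/-- Partial sums stay bounded: if flipping the binary digits at positions `2i+1` and
`2i+2` negates `f`, `|f| ≤ 1`, and `f` is supported on odd multiples of `2^(2i)`,
then all partial sums of `f` lie in `[−2, 2]`. -/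
theorem xor_flip_partial_sums_bounded
    (i : ℕ) (f : ℕ → ℤ)
    (hf1 : ∀ S : ℕ, f (S ^^^ (3 * 2 ^ (2 * i + 1))) = -f S)
    (hf2 : ∀ S : ℕ, |f S| ≤ 1)
    (hf3 : ∀ S : ℕ, S % 2 ^ (2 * i + 1) ≠ 2 ^ (2 * i) → f S = 0) :
    ∀ T : ℕ, |∑ S ∈ Finset.range T, f S| ≤ 2 := by
  intro T
  set N := 2 ^ (2*i) with hN
  have hNpos : 0 < N := Nat.pow_pos (by norm_num)
  have h2N : 2 ^ (2*i+1) = 2*N := by rw [pow_succ, mul_comm]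
  have h2Npos : 0 < 2*N := by omega
  set F : ℕ → ℤ := fun k => f (2*N*k + N) with hF
  have hF1 : ∀ k, F (k ^^^ 3) = -F k := by
    intro k
    have key := xor_split (2*i+1) k N 3 0 (by rw [h2N]; omega) (Nat.pow_pos (by norm_num))
    simp only [Nat.xor_zero, Nat.add_zero] at key
    have : F (k ^^^ 3) = f ((2^(2*i+1)*k + N) ^^^ (2^(2*i+1)*3)) := by
      rw [key, hF, h2N]
    rw [this, show 2^(2*i+1)*3 = 3*2^(2*i+1) from by ring, hf1, hF, h2N]
  have hF2 : ∀ k, |F k| ≤ 1 := fun k => hf2 _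
  set K := (T + N - 1) / (2*N) with hK
  have key : ∀ k : ℕ, k < K ↔ 2*N*k + N < T := by
    intro k
    have h1 : k < K ↔ (k+1) * (2*N) ≤ T + N - 1 := by
      rw [hK, ← Nat.le_div_iff_mul_le h2Npos]; omega
    rw [h1, show (k+1)*(2*N) = 2*N*k + 2*N from by ring]
    omega
  have himg : (Finset.range T).filter (fun S => S % (2*N) = N)
      = Finset.image (fun k => 2*N*k + N) (Finset.range K) := by
    ext S
    simp only [Finset.mem_filter, Finset.mem_range, Finset.mem_image]
    constructor
    · rintro ⟨hST, hmod⟩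
      refine ⟨S / (2*N), ?_, ?_⟩
      · have hd := Nat.div_add_mod S (2*N)
        rw [hmod] at hd
        rw [key, hd]; exact hST
      · have hd := Nat.div_add_mod S (2*N)
        rw [hmod] at hd; exact hd
    · rintro ⟨k, hk, rfl⟩
      rw [key] at hk
      refine ⟨hk, ?_⟩
      rw [Nat.mul_add_mod, Nat.mod_eq_of_lt (by omega)]
  have hsum : ∑ S ∈ Finset.range T, f S = ∑ k ∈ Finset.range K, F k := by
    rw [← Finset.sum_filter_of_ne (f := f) (p := fun S => S % (2*N) = N)
      (by intro S hS hfS; by_contra hne; exact hfS (hf3 S (by rwa [h2N]))), himg,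
      Finset.sum_image (by
        intro a _ b _ hab
        exact Nat.eq_of_mul_eq_mul_left h2Npos (Nat.add_right_cancel hab))]
  rw [hsum]
  exact abs_partial F hF1 hF2 K
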